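/- For the family Φ_ρ of Bernstein functions induced by the generalized Gamma measure: if −∞ < ρ₁ < ρ₂ ≤ 1, then for every s ≥ 0 one has Φ'_{ρ₁}(s) ≥ Φ'_{ρ₂}(s) and Φ_{ρ₁}(s) ≥ Φ_{ρ₂}(s); consequently, for every α > 0 the maximum concavities of the rescaled penalties satisfy α²/Φ_{ρ₁}(α) ≤ α²/Φ_{ρ₂}(α). -/

import Mathlib

open Filter Set Topology

/-- The family `Φ_ρ` of Bernstein functions induced by the generalized Gamma measure. -/
noncomputable def PhiRho (ρ s : ℝ) : ℝ :=
  if ρ = 0 then Real.log (1 + s)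
  else if ρ = 1 then 1 - Real.exp (-s)
  else (1 / ρ) * (1 - (1 + (1 - ρ) * s) ^ (-(ρ / (1 - ρ))))

/-- The first derivative `Φ'_ρ` of `Φ_ρ`. -/
noncomputable def PhiRho' (ρ s : ℝ) : ℝ :=
  if ρ = 0 then 1 / (1 + s)
  else if ρ = 1 then Real.exp (-s)
  else (1 + (1 - ρ) * s) ^ (-(1 / (1 - ρ)))

lemma phiRho_zero (ρ : ℝ) : PhiRho ρ 0 = 0 := by
  unfold PhiRho
  split_ifs with h1 h2 <;> simp

lemma phiRho'_eq {ρ : ℝ} (h : ρ ≠ 1) (s : ℝ) :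
    PhiRho' ρ s = (1 + (1 - ρ) * s) ^ (-(1 / (1 - ρ))) := by
  unfold PhiRho'
  rcases eq_or_ne ρ 0 with rfl | h0
  · norm_num [Real.rpow_neg_one]
  · simp [h0, h]

lemma key_ineq {t₁ t₂ s : ℝ} (h2 : 0 < t₂) (h12 : t₂ ≤ t₁) (hs : 0 ≤ s) :
    (1 + t₂ * s) ^ (-(1 / t₂)) ≤ (1 + t₁ * s) ^ (-(1 / t₁)) := by
  have h1 : 0 < t₁ := h2.trans_le h12
  have hb2 : (0:ℝ) < 1 + t₂ * s := by nlinarith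
  have hb1 : (0:ℝ) < 1 + t₁ * s := by nlinarith
  have hp : 1 ≤ t₁ / t₂ := (one_le_div h2).2 h12
  have hbern : 1 + t₁ * s ≤ (1 + t₂ * s) ^ (t₁ / t₂) := by
    have h := one_add_mul_self_le_rpow_one_add (s := t₂ * s) (by nlinarith) hp
    have : 1 + t₁ * s = 1 + t₁ / t₂ * (t₂ * s) := by field_simp
    linarith [h, this.le]
  have hlog : t₂ * Real.log (1 + t₁ * s) ≤ t₁ * Real.log (1 + t₂ * s) := by
    have h := Real.log_le_log hb1 hbern
    rw [Real.log_rpow hb2] at h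
    have h' := mul_le_mul_of_nonneg_left h h2.le
    have : t₂ * (t₁ / t₂ * Real.log (1 + t₂ * s)) = t₁ * Real.log (1 + t₂ * s) := by
      field_simp
    linarith [h', this.le]
  rw [Real.rpow_def_of_pos hb1, Real.rpow_def_of_pos hb2]
  apply Real.exp_le_exp.2
  rw [mul_neg, mul_neg, neg_le_neg_iff, mul_one_div, mul_one_div,
    div_le_div_iff₀ h1 h2]
  nlinarith [hlog]

lemma phiRho'_anti {ρ₁ ρ₂ s : ℝ} (h12 : ρ₁ < ρ₂) (h2 : ρ₂ ≤ 1) (hs : 0 ≤ s) :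
    PhiRho' ρ₂ s ≤ PhiRho' ρ₁ s := by
  have h1 : ρ₁ ≠ 1 := ne_of_lt (lt_of_lt_of_le h12 h2)
  have ht1 : 0 < 1 - ρ₁ := by linarith [lt_of_lt_of_le h12 h2]
  rw [phiRho'_eq h1]
  rcases eq_or_lt_of_le h2 with rfl | h2'
  · unfold PhiRho'
    rw [if_neg one_ne_zero, if_pos rfl]
    have hb1 : (0:ℝ) < 1 + (1 - ρ₁) * s := by nlinarith
    rw [Real.rpow_def_of_pos hb1]
    apply Real.exp_le_exp.2
    rw [mul_neg, neg_le_neg_iff, mul_one_div, div_le_iff₀ ht1]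
    have hlog := Real.log_le_sub_one_of_pos hb1
    nlinarith [hlog]
  · rw [phiRho'_eq (ne_of_lt h2')]
    exact key_ineq (by linarith) (by linarith) hs

lemma phiRho'_pos {ρ s : ℝ} (hρ : ρ ≤ 1) (hs : 0 ≤ s) : 0 < PhiRho' ρ s := by
  rcases eq_or_ne ρ 1 with rfl | h1
  · simp only [PhiRho', if_neg one_ne_zero, if_pos rfl]
    exact Real.exp_pos _
  · rw [phiRho'_eq h1]
    have : ρ < 1 := lt_of_le_of_ne hρ h1
    exact Real.rpow_pos_of_pos (by nlinarith) _

lemma hasDerivAt_phiRho {ρ : ℝ} (hρ : ρ ≤ 1) {s : ℝ} (hs : 0 ≤ s) :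
    HasDerivAt (PhiRho ρ) (PhiRho' ρ s) s := by
  rcases eq_or_ne ρ 0 with rfl | h0
  · have h : HasDerivAt (fun x : ℝ => Real.log (1 + x)) (1 * (1 + s)⁻¹) s := by
      exact (((hasDerivAt_id s).const_add 1).log (by positivity))
    simp only [one_mul] at h
    have he : PhiRho 0 = fun x : ℝ => Real.log (1 + x) := by
      funext x; simp [PhiRho]
    have he' : PhiRho' 0 s = (1 + s)⁻¹ := by simp [PhiRho', one_div]
    rw [he, he']
    exact h
  rcases eq_or_ne ρ 1 with rfl | h1
  · have h : HasDerivAt (fun x : ℝ => 1 - Real.exp (-x)) (Real.exp (-s)) s := by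
      have h2 := ((Real.hasDerivAt_exp (-s)).comp s (hasDerivAt_neg s)).const_sub 1
      simpa using h2
    have he : PhiRho 1 = fun x : ℝ => 1 - Real.exp (-x) := by
      funext x; simp [PhiRho]
    have he' : PhiRho' 1 s = Real.exp (-s) := by simp [PhiRho']
    rw [he, he']
    exact h
  · have hlt : ρ < 1 := lt_of_le_of_ne hρ h1
    have ht : 0 < 1 - ρ := by linarith
    set c : ℝ := 1 - ρ with hc
    set p : ℝ := -(ρ / (1 - ρ)) with hp
    have hb : (0:ℝ) < 1 + c * s := by nlinarith
    have inner : HasDerivAt (fun x : ℝ => 1 + c * x) c s := by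
      simpa using ((hasDerivAt_id s).const_mul c).const_add 1
    have pow : HasDerivAt (fun y : ℝ => y ^ p) (p * (1 + c * s) ^ (p - 1)) (1 + c * s) :=
      Real.hasDerivAt_rpow_const (Or.inl hb.ne')
    have comp : HasDerivAt (fun x : ℝ => (1 + c * x) ^ p) (p * (1 + c * s) ^ (p - 1) * c) s :=
      by have := pow.comp s inner; exact this
    have final := (comp.const_sub 1).const_mul (1 / ρ)
    have he : PhiRho ρ = fun x : ℝ => (1 / ρ) * (1 - (1 + c * x) ^ p) := by
      funext x; simp [PhiRho, h0, h1]; rfl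
    have hco : 1 / ρ * -(p * (1 + c * s) ^ (p - 1) * c) = (1 + c * s) ^ (p - 1) := by
      rw [hp, hc]
      field_simp
      try ring
    have hpe : p - 1 = -(1 / (1 - ρ)) := by
      rw [hp]
      field_simp
      try ring
    have he' : PhiRho' ρ s = (1 + c * s) ^ (p - 1) := by
      rw [phiRho'_eq h1, hpe, hc]
    rw [he, he']
    rw [← hco]
    exact final

lemma phiRho_le {ρ₁ ρ₂ : ℝ} (h12 : ρ₁ < ρ₂) (h2 : ρ₂ ≤ 1) {s : ℝ} (hs : 0 ≤ s) :
    PhiRho ρ₂ s ≤ PhiRho ρ₁ s := by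
  have hρ₁ : ρ₁ ≤ 1 := le_of_lt (lt_of_lt_of_le h12 h2)
  set F : ℝ → ℝ := fun x => PhiRho ρ₁ x - PhiRho ρ₂ x with hF
  have hder : ∀ x ∈ Set.Ici (0:ℝ), HasDerivAt F (PhiRho' ρ₁ x - PhiRho' ρ₂ x) x := by
    intro x hx
    exact (hasDerivAt_phiRho hρ₁ hx).sub (hasDerivAt_phiRho h2 hx)
  have hmono : MonotoneOn F (Set.Ici 0) := by
    apply monotoneOn_of_deriv_nonneg (convex_Ici 0)
    · intro x hx
      exact (hder x hx).continuousAt.continuousWithinAt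
    · intro x hx
      rw [interior_Ici] at hx
      exact ((hder x (le_of_lt hx : (0:ℝ) ≤ x)).differentiableAt).differentiableWithinAt
    · intro x hx
      rw [interior_Ici] at hx
      rw [(hder x (le_of_lt hx : (0:ℝ) ≤ x)).deriv]
      linarith [phiRho'_anti h12 h2 (le_of_lt hx)]
  have h0 : F 0 = 0 := by simp [hF, phiRho_zero]
  have := hmono (Set.self_mem_Ici) hs hs
  rw [h0] at this
  simpa [hF] using this

lemma phiRho_pos {ρ : ℝ} (hρ : ρ ≤ 1) {α : ℝ} (hα : 0 < α) : 0 < PhiRho ρ α := by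
  have hder : ∀ x ∈ Set.Ici (0:ℝ), HasDerivAt (PhiRho ρ) (PhiRho' ρ x) x := fun x hx =>
    hasDerivAt_phiRho hρ hx
  have hmono : StrictMonoOn (PhiRho ρ) (Set.Ici 0) := by
    apply strictMonoOn_of_deriv_pos (convex_Ici 0)
    · intro x hx
      exact (hder x hx).continuousAt.continuousWithinAt
    · intro x hx
      rw [interior_Ici] at hx
      rw [(hder x (le_of_lt hx : (0:ℝ) ≤ x)).deriv]
      exact phiRho'_pos hρ (le_of_lt hx)
  have := hmono Set.self_mem_Ici (le_of_lt hα : (0:ℝ) ≤ α) hα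
  rwa [phiRho_zero] at this

/-- if `ρ₁ < ρ₂ ≤ 1` then `Φ'_{ρ₁}(s) ≥ Φ'_{ρ₂}(s)` and
`Φ_{ρ₁}(s) ≥ Φ_{ρ₂}(s)` for all `s ≥ 0`; consequently the maximum concavities of the
rescaled penalties satisfy `α²/Φ_{ρ₁}(α) ≤ α²/Φ_{ρ₂}(α)` for every `α > 0`. -/
theorem stmt_5 (ρ₁ ρ₂ : ℝ) (h12 : ρ₁ < ρ₂) (h2 : ρ₂ ≤ 1) :
    (∀ s : ℝ, 0 ≤ s → PhiRho' ρ₂ s ≤ PhiRho' ρ₁ s ∧ PhiRho ρ₂ s ≤ PhiRho ρ₁ s) ∧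
    ∀ α : ℝ, 0 < α → α ^ 2 / PhiRho ρ₁ α ≤ α ^ 2 / PhiRho ρ₂ α := by
  constructor
  · intro s hs
    exact ⟨phiRho'_anti h12 h2 hs, phiRho_le h12 h2 hs⟩
  · intro α hα
    have hpos : 0 < PhiRho ρ₂ α := phiRho_pos h2 hα
    have hle : PhiRho ρ₂ α ≤ PhiRho ρ₁ α := phiRho_le h12 h2 (le_of_lt hα)
    exact div_le_div_of_nonneg_left (sq_nonneg α) hpos hle
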